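/- arXiv:1405.4688 — 2 statements merged into one kernel-verified Lean document; each statement's English description precedes it below -/
import Mathlib

section
/- Let 0 < p ≤ 1 and λ ∈ [0,1]. The perspective map (A, B, C) ↦ C^{1/2} (C^{-1/2}(λA + (1-λ)B)C^{-1/2})^p C^{1/2} is jointly concave on triples of n×n positive definite complex matrices: for positive definite triples (A₁,B₁,C₁), (A₂,B₂,C₂) and α ∈ [0,1], with (A,B,C) = α(A₁,B₁,C₁) + (1-α)(A₂,B₂,C₂) taken entrywise, C^{1/2}(C^{-1/2}(λA+(1-λ)B)C^{-1/2})^p C^{1/2} ≥ α C₁^{1/2}(C₁^{-1/2}(λA₁+(1-λ)B₁)C₁^{-1/2})^p C₁^{1/2} + (1-α) C₂^{1/2}(C₂^{-1/2}(λA₂+(1-λ)B₂)C₂^{-1/2})^p C₂^{1/2} in the Loewner order. -/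
open Matrix
open scoped ComplexOrder

/-- Matrix power by a real exponent via the functional calculus
(unitary diagonalization for Hermitian matrices; junk value otherwise). -/
noncomputable def mpow {n : ℕ} (A : Matrix (Fin n) (Fin n) ℂ) (q : ℝ) :
    Matrix (Fin n) (Fin n) ℂ :=
  if hA : A.IsHermitian then
    (hA.eigenvectorUnitary : Matrix (Fin n) (Fin n) ℂ) *
      Matrix.diagonal (fun i => ((hA.eigenvalues i ^ q : ℝ) : ℂ)) *
      (star (hA.eigenvectorUnitary : Matrix (Fin n) (Fin n) ℂ))
  else 0

/-- The perspective map `(A,B,C) ↦ C^{1/2} (C^{-1/2}(λA + (1-λ)B)C^{-1/2})^p C^{1/2}`. -/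
noncomputable def persp {n : ℕ} (lam p : ℝ) (A B C : Matrix (Fin n) (Fin n) ℂ) :
    Matrix (Fin n) (Fin n) ℂ :=
  mpow C (1 / 2) *
    mpow (mpow C (-(1 / 2)) * (lam • A + (1 - lam) • B) * mpow C (-(1 / 2))) p *
      mpow C (1 / 2)

set_option linter.unusedSectionVars false
set_option linter.unusedVariables false

namespace Aux

variable {n : ℕ}

local notation "Mat" => Matrix (Fin n) (Fin n) ℂ

section generic
variable {m : Type*} [Fintype m] [DecidableEq m]

lemma real_smul_eq (c : ℝ) (A : Matrix m m ℂ) : c • A = (c : ℂ) • A := by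
  ext i j
  simp [Complex.real_smul]

lemma herm_smul {A : Matrix m m ℂ} (hA : A.IsHermitian) (c : ℝ) : (c • A).IsHermitian := by
  rw [real_smul_eq]
  show _ᴴ = _
  rw [conjTranspose_smul, Complex.star_def, Complex.conj_ofReal, hA.eq]

lemma psd_smul {A : Matrix m m ℂ} (hA : A.PosSemidef) {c : ℝ} (hc : 0 ≤ c) :
    (c • A).PosSemidef := by
  rw [real_smul_eq]
  refine .of_dotProduct_mulVec_nonneg (by rw [IsHermitian, conjTranspose_smul, Complex.star_def, Complex.conj_ofReal, hA.1.eq]) fun x => ?_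
  rw [Matrix.smul_mulVec, dotProduct_smul]
  exact smul_nonneg (by exact_mod_cast hc) (hA.dotProduct_mulVec_nonneg x)

lemma pd_smul {A : Matrix m m ℂ} (hA : A.PosDef) {c : ℝ} (hc : 0 < c) :
    (c • A).PosDef := by
  rw [real_smul_eq]
  refine .of_dotProduct_mulVec_pos (by rw [IsHermitian, conjTranspose_smul, Complex.star_def, Complex.conj_ofReal, hA.1.eq]) fun x hx => ?_
  rw [Matrix.smul_mulVec, dotProduct_smul]
  exact smul_pos (by exact_mod_cast hc) (hA.dotProduct_mulVec_pos hx)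

lemma pd_convex {A B : Matrix m m ℂ} (hA : A.PosDef) (hB : B.PosDef) {α : ℝ}
    (h0 : 0 ≤ α) (h1 : α ≤ 1) : (α • A + (1 - α) • B).PosDef := by
  rcases h0.eq_or_lt with h | h
  · simp [← h, hB]
  · rcases h1.eq_or_lt with h' | h'
    · simp [h', hA]
    · exact (pd_smul hA h).add (pd_smul hB (by linarith))

lemma psd_convex {A B : Matrix m m ℂ} (hA : A.PosSemidef) (hB : B.PosSemidef) {α : ℝ}
    (h0 : 0 ≤ α) (h1 : α ≤ 1) : (α • A + (1 - α) • B).PosSemidef :=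
  (psd_smul hA h0).add (psd_smul hB (by linarith))

open scoped MatrixOrder in
lemma psd_blockdiag {P Q : Matrix m m ℂ} (hP : P.PosSemidef) (hQ : Q.PosSemidef) :
    (fromBlocks P 0 0 Q).PosSemidef := by
  obtain ⟨L, hL⟩ := CStarAlgebra.nonneg_iff_eq_star_mul_self.mp hP.nonneg
  obtain ⟨K, hK⟩ := CStarAlgebra.nonneg_iff_eq_star_mul_self.mp hQ.nonneg
  have : fromBlocks P 0 0 Q = (fromBlocks L 0 0 K)ᴴ * (fromBlocks L 0 0 K) := by
    rw [fromBlocks_conjTranspose, fromBlocks_multiply]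
    simp [hL, hK, star_eq_conjTranspose]
  rw [this]
  exact posSemidef_conjTranspose_mul_self _

lemma herm_sandwich {S X : Matrix m m ℂ} (hS : S.IsHermitian) (hX : X.IsHermitian) :
    (S * X * S).IsHermitian := by
  show _ᴴ = _
  rw [conjTranspose_mul, conjTranspose_mul, hS.eq, hX.eq, mul_assoc]

end generic


section mpowLemmas

lemma mpow_eq {A : Mat} (hA : A.IsHermitian) (q : ℝ) :
    mpow A q = (hA.eigenvectorUnitary : Mat) *
      Matrix.diagonal (fun i => ((hA.eigenvalues i ^ q : ℝ) : ℂ)) *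
      (star (hA.eigenvectorUnitary : Mat)) :=
  dif_pos hA

lemma conj_mul_conj {U : Mat} (hU : star U * U = 1) (X Y : Mat) :
    (U * X * star U) * (U * Y * star U) = U * (X * Y) * star U := by
  calc (U * X * star U) * (U * Y * star U)
      = U * X * (star U * U) * (Y * star U) := by noncomm_ring
    _ = U * (X * Y) * star U := by rw [hU]; noncomm_ring

lemma mpow_herm (A : Mat) (q : ℝ) : (mpow A q).IsHermitian := by
  by_cases hA : A.IsHermitian
  · rw [mpow_eq hA, star_eq_conjTranspose]
    exact isHermitian_mul_mul_conjTranspose _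
      (isHermitian_diagonal_of_self_adjoint _
        (funext fun i => by simp [Pi.star_apply, Complex.star_def, Complex.conj_ofReal]))
  · rw [mpow, dif_neg hA]
    exact isHermitian_zero

lemma unit_det {A : Mat} (hA : A ∈ Matrix.unitaryGroup (Fin n) ℂ) : IsUnit A.det := by
  have := Matrix.mem_unitaryGroup_iff.mp hA
  exact IsUnit.of_mul_eq_one (star A).det (by rw [← Matrix.det_mul, this, Matrix.det_one])

lemma pd_conj {A B : Mat} (hA : A.PosDef) (hB : IsUnit B.det) :
    (Bᴴ * A * B).PosDef := by
  refine .of_dotProduct_mulVec_pos (isHermitian_conjTranspose_mul_mul B hA.1) fun x hx => ?_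
  have hBx : B *ᵥ x ≠ 0 := by
    intro h
    apply hx
    have := congrArg (fun v => B⁻¹ *ᵥ v) h
    simpa [Matrix.mulVec_mulVec, Matrix.nonsing_inv_mul B hB] using this
  have := hA.dotProduct_mulVec_pos hBx
  simpa only [star_mulVec, dotProduct_mulVec, vecMul_vecMul] using this

lemma pd_conj' {A B : Mat} (hA : A.PosDef) (hB : IsUnit B.det) :
    (B * A * Bᴴ).PosDef := by
  have := pd_conj hA (B := Bᴴ) (by rwa [Matrix.det_conjTranspose, isUnit_star])
  simpa only [conjTranspose_conjTranspose] using this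

lemma pd_conj_herm {A B : Mat} (hA : A.PosDef) (hB : B.IsHermitian)
    (hdet : IsUnit B.det) : (B * A * B).PosDef := by
  have := pd_conj' hA hdet
  rwa [hB.eq] at this

lemma mpow_pd {A : Mat} (hA : A.PosDef) (q : ℝ) : (mpow A q).PosDef := by
  rw [mpow_eq hA.1]
  refine pd_conj' ?_ (unit_det (hA.1.eigenvectorUnitary).2)
  rw [Matrix.posDef_diagonal_iff]
  intro i
  have := hA.eigenvalues_pos i
  have : (0:ℝ) < hA.1.eigenvalues i ^ q := Real.rpow_pos_of_pos this q
  exact Complex.zero_lt_real.mpr this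

lemma mpow_mul {A : Mat} (hA : A.PosDef) (a b : ℝ) :
    mpow A a * mpow A b = mpow A (a + b) := by
  rw [mpow_eq hA.1, mpow_eq hA.1, mpow_eq hA.1]
  have hU : (star (hA.1.eigenvectorUnitary : Mat)) * (hA.1.eigenvectorUnitary : Mat) = 1 :=
    Matrix.mem_unitaryGroup_iff'.mp (hA.1.eigenvectorUnitary).2
  rw [conj_mul_conj hU, diagonal_mul_diagonal]
  have : (fun i => ((hA.1.eigenvalues i ^ a : ℝ) : ℂ) * ((hA.1.eigenvalues i ^ b : ℝ) : ℂ)) =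
      fun i => ((hA.1.eigenvalues i ^ (a + b) : ℝ) : ℂ) :=
    funext fun i => by rw [← Complex.ofReal_mul, ← Real.rpow_add (hA.eigenvalues_pos i)]
  rw [this]

lemma mpow_zero {A : Mat} (hA : A.IsHermitian) : mpow A 0 = 1 := by
  rw [mpow_eq hA]
  have : (fun i => ((hA.eigenvalues i ^ (0:ℝ) : ℝ) : ℂ)) = fun _ => 1 := by
    ext i; simp [Real.rpow_zero]
  rw [this, diagonal_one, mul_one, Matrix.mem_unitaryGroup_iff.mp (hA.eigenvectorUnitary).2]

lemma mpow_one {A : Mat} (hA : A.IsHermitian) : mpow A 1 = A := by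
  rw [mpow_eq hA]
  have : (fun i => ((hA.eigenvalues i ^ (1:ℝ) : ℝ) : ℂ)) =
      (RCLike.ofReal ∘ hA.eigenvalues) := by
    ext i; simp [Real.rpow_one]
  rw [this]
  exact hA.spectral_theorem.symm

lemma mpow_half_mul {A : Mat} (hA : A.PosDef) :
    mpow A (1/2) * mpow A (1/2) = A := by
  rw [mpow_mul hA]
  norm_num
  exact mpow_one hA.1

lemma mpow_neg_half_mul_half {A : Mat} (hA : A.PosDef) :
    mpow A (-(1/2)) * mpow A (1/2) = 1 := by
  rw [mpow_mul hA]
  norm_num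
  exact mpow_zero hA.1

lemma mpow_half_mul_neg_half {A : Mat} (hA : A.PosDef) :
    mpow A (1/2) * mpow A (-(1/2)) = 1 := by
  rw [mpow_mul hA]
  norm_num
  exact mpow_zero hA.1

lemma mpow_inv {A : Mat} (hA : A.PosDef) (q : ℝ) : (mpow A q)⁻¹ = mpow A (-q) := by
  have : mpow A (-q) * mpow A q = 1 := by
    rw [mpow_mul hA, neg_add_cancel]
    exact mpow_zero hA.1
  exact Matrix.inv_eq_left_inv this

lemma mpow_neg_half_sq {A : Mat} (hA : A.PosDef) :
    mpow A (-(1/2)) * mpow A (-(1/2)) = A⁻¹ := by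
  rw [mpow_mul hA]
  norm_num
  rw [show (-1 : ℝ) = -(1:ℝ) by norm_num, ← mpow_inv hA 1, mpow_one hA.1]

end mpowLemmas

section keyLemma

lemma key_lemma {T Y : Mat} (hT : T.PosSemidef) (hY : Y.IsHermitian)
    (h : (T * T - Y * Y).PosSemidef) : (T - Y).PosSemidef := by
  set M := T - Y with hMdef
  have hM : M.IsHermitian := hT.1.sub hY
  apply hM.posSemidef_iff_eigenvalues_nonneg.mpr
  intro i
  by_contra hneg
  push_neg at hneg
  set lam := hM.eigenvalues i with hlam
  set v : Fin n → ℂ := ⇑(hM.eigenvectorBasis i) with hvdef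
  have hv : M *ᵥ v = lam • v := hM.mulVec_eigenvectorBasis i
  have hv0 : v ≠ 0 := by
    intro h0
    exact hM.eigenvectorBasis.orthonormal.ne_zero i (by ext j; exact congrFun h0 j)
  set a := star v ⬝ᵥ (T *ᵥ v) with ha
  set b := star v ⬝ᵥ (Y *ᵥ v) with hb
  set c := star v ⬝ᵥ v with hc
  -- decomposition T*T - Y*Y = T*M + M*Y
  have hdec : T * T - Y * Y = T * M + M * Y := by rw [hMdef]; noncomm_ring
  have h1 : (0:ℂ) ≤ lam • a + lam • b := by
    have := h.dotProduct_mulVec_nonneg v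
    rw [hdec, add_mulVec, dotProduct_add] at this
    have e1 : star v ⬝ᵥ ((T * M) *ᵥ v) = lam • a := by
      rw [← mulVec_mulVec, hv, mulVec_smul, dotProduct_smul]
    have e2 : star v ⬝ᵥ ((M * Y) *ᵥ v) = lam • b := by
      rw [← mulVec_mulVec, dotProduct_mulVec, ← hM.eq, ← star_mulVec, hv, star_smul,
        star_trivial, smul_dotProduct]
    rwa [e1, e2] at this
  have h2 : a - b = lam • c := by
    have : star v ⬝ᵥ (M *ᵥ v) = lam • c := by rw [hv, dotProduct_smul]
    rw [← this, hMdef, sub_mulVec, dotProduct_sub]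
  -- pass to real parts
  have hare : 0 ≤ a.re := (Complex.le_def.mp (hT.dotProduct_mulVec_nonneg v)).1.trans_eq' (by simp)
  have haim : 0 ≤ ((lam • a + lam • b)).re := by
    have := (Complex.le_def.mp h1).1
    simpa using this
  have hsum : lam * (a.re + b.re) ≥ 0 := by
    have : (lam • a + lam • b).re = lam * (a.re + b.re) := by
      simp [Complex.real_smul, Complex.mul_re, Complex.ofReal_re, Complex.ofReal_im]
      ring
    linarith [this ▸ haim]
  have hcre : 0 < c.re := by
    have hnn : (0:ℂ) ≤ c := dotProduct_star_self_nonneg v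
    have hne : c ≠ 0 := fun h0 => hv0 (dotProduct_star_self_eq_zero.mp h0)
    have him : c.im = 0 := by
      have := (Complex.le_def.mp hnn).2
      simpa using this.symm
    have hre : 0 ≤ c.re := by
      have := (Complex.le_def.mp hnn).1
      simpa using this
    rcases hre.lt_or_eq with h0 | h0
    · exact h0
    · exact absurd (Complex.ext (by simpa using h0.symm) (by simpa using him)) hne
  have hdiff : a.re - b.re = lam * c.re := by
    have := congrArg Complex.re h2
    simpa [Complex.real_smul, Complex.mul_re] using this
  nlinarith [mul_neg_of_neg_of_pos hneg hcre]

end keyLemma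

section geoSection

/-- the matrix geometric mean of positive definite matrices -/
noncomputable def geo (A B : Mat) : Mat :=
  mpow A (1/2) * mpow (mpow A (-(1/2)) * B * mpow A (-(1/2))) (1/2) * mpow A (1/2)

lemma pd_det_isUnit {A : Mat} (hA : A.PosDef) : IsUnit A.det :=
  isUnit_iff_ne_zero.mpr hA.det_pos.ne'

noncomputable def pd_invertible {A : Mat} (hA : A.PosDef) : Invertible A :=
  A.invertibleOfIsUnitDet (pd_det_isUnit hA)

lemma W_pd {A B : Mat} (hA : A.PosDef) (hB : B.PosDef) :
    (mpow A (-(1/2)) * B * mpow A (-(1/2))).PosDef :=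
  pd_conj_herm hB (mpow_herm A _) (pd_det_isUnit (mpow_pd hA _))

lemma geo_pd {A B : Mat} (hA : A.PosDef) (hB : B.PosDef) : (geo A B).PosDef :=
  pd_conj_herm (mpow_pd (W_pd hA hB) _) (mpow_herm A _) (pd_det_isUnit (mpow_pd hA _))

lemma geo_herm {A B : Mat} (hA : A.PosDef) (hB : B.PosDef) : (geo A B).IsHermitian :=
  herm_sandwich (mpow_herm A _) (mpow_herm _ _)

lemma riccati {A B : Mat} (hA : A.PosDef) (hB : B.PosDef) :
    geo A B * A⁻¹ * geo A B = B := by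
  simp only [geo]
  have hSR : mpow A (1/2) * mpow A (-(1/2)) = 1 := mpow_half_mul_neg_half hA
  have hRS : mpow A (-(1/2)) * mpow A (1/2) = 1 := mpow_neg_half_mul_half hA
  have hVV : mpow (mpow A (-(1/2)) * B * mpow A (-(1/2))) (1/2) *
      mpow (mpow A (-(1/2)) * B * mpow A (-(1/2))) (1/2) =
      mpow A (-(1/2)) * B * mpow A (-(1/2)) := mpow_half_mul (W_pd hA hB)
  have hAinv : A⁻¹ = mpow A (-(1/2)) * mpow A (-(1/2)) := (mpow_neg_half_sq hA).symm
  set S := mpow A (1/2)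
  set R := mpow A (-(1/2))
  set V := mpow (R * B * R) (1/2)
  calc (S * V * S) * A⁻¹ * (S * V * S)
      = S * V * (S * R) * (R * S) * (V * S) := by rw [hAinv]; noncomm_ring
    _ = S * (V * V) * S := by rw [hSR, hRS]; noncomm_ring
    _ = (S * R) * B * (R * S) := by rw [hVV]; noncomm_ring
    _ = B := by rw [hSR, hRS, one_mul, mul_one]

open scoped MatrixOrder in
lemma riccati_unique {A B G : Mat} (hA : A.PosDef) (hB : B.PosDef) (hG : G.PosDef)
    (h : G * A⁻¹ * G = B) : G = geo A B := by
  have hSR : mpow A (1/2) * mpow A (-(1/2)) = 1 := mpow_half_mul_neg_half hA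
  have hRS : mpow A (-(1/2)) * mpow A (1/2) = 1 := mpow_neg_half_mul_half hA
  have hAinv : A⁻¹ = mpow A (-(1/2)) * mpow A (-(1/2)) := (mpow_neg_half_sq hA).symm
  set S := mpow A (1/2) with hSdef
  set R := mpow A (-(1/2)) with hRdef
  set W := R * B * R with hWdef
  set V := mpow W (1/2) with hVdef
  have hVV : V * V = W := mpow_half_mul (W_pd hA hB)
  set Y := R * G * R with hYdef
  have hY : Y.PosDef := pd_conj_herm hG (mpow_herm A _) (pd_det_isUnit (mpow_pd hA _))
  have hYsq : Y * Y = W := by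
    calc Y * Y = R * (G * A⁻¹ * G) * R := by rw [hYdef, hAinv]; noncomm_ring
      _ = W := by rw [h, hWdef]
  have hYV : Y = V := by
    refine (CFC.sqrt_unique (a := Y ^ 2) (b := Y) (pow_two Y).symm hY.posSemidef.nonneg).symm.trans ((congrArg CFC.sqrt ?_).trans (CFC.sqrt_unique (b := V) (pow_two V).symm (mpow_pd (W_pd hA hB) _).posSemidef.nonneg))
    rw [pow_two, pow_two, hYsq, hVV]
  have hmain : S * Y * S = G := by
    calc S * Y * S = (S * R) * G * (R * S) := by rw [hYdef]; noncomm_ring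
      _ = G := by rw [hSR, hRS, one_mul, mul_one]
  rw [← hmain, hYV]
  rfl

lemma geo_block {A B : Mat} (hA : A.PosDef) (hB : B.PosDef) :
    (fromBlocks A (geo A B) (geo A B) B).PosSemidef := by
  haveI : Invertible A := pd_invertible hA
  have h0 : (B - (geo A B)ᴴ * A⁻¹ * geo A B).PosSemidef := by
    rw [(geo_herm hA hB).eq, riccati hA hB, sub_self]
    exact PosSemidef.zero
  have := (Matrix.PosDef.fromBlocks₁₁ (geo A B) B hA).mpr h0
  rwa [(geo_herm hA hB).eq] at this

lemma geo_max {A B X : Mat} (hA : A.PosDef) (hB : B.PosDef) (hX : X.IsHermitian)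
    (h : (fromBlocks A X X B).PosSemidef) : (geo A B - X).PosSemidef := by
  haveI : Invertible A := pd_invertible hA
  have h2 : (fromBlocks A X Xᴴ B).PosSemidef := by rwa [hX.eq]
  have h' := (Matrix.PosDef.fromBlocks₁₁ X B hA).mp h2
  rw [hX.eq] at h'
  -- conjugate by R
  have hc := h'.mul_mul_conjTranspose_same (mpow A (-(1/2)))
  rw [(mpow_herm A (-(1/2))).eq] at hc
  have hAinv : A⁻¹ = mpow A (-(1/2)) * mpow A (-(1/2)) := (mpow_neg_half_sq hA).symm
  have hSR : mpow A (1/2) * mpow A (-(1/2)) = 1 := mpow_half_mul_neg_half hA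
  have hRS : mpow A (-(1/2)) * mpow A (1/2) = 1 := mpow_neg_half_mul_half hA
  set S := mpow A (1/2) with hSdef
  set R := mpow A (-(1/2)) with hRdef
  set W := R * B * R with hWdef
  set V := mpow W (1/2) with hVdef
  have hVV : V * V = W := mpow_half_mul (W_pd hA hB)
  set Y := R * X * R with hYdef
  have hexp : R * (B - X * A⁻¹ * X) * R = V * V - Y * Y := by
    rw [hVV, hWdef, hYdef, hAinv]; noncomm_ring
  rw [hexp] at hc
  have hkey := key_lemma (mpow_pd (W_pd hA hB) _).posSemidef
    (herm_sandwich (mpow_herm A _) hX) hc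
  -- conjugate back by S
  have hfin := hkey.mul_mul_conjTranspose_same S
  rw [(mpow_herm A (1/2)).eq] at hfin
  have hSYS : S * Y * S = X := by
    calc S * Y * S = (S * R) * X * (R * S) := by rw [hYdef]; noncomm_ring
      _ = X := by rw [hSR, hRS, one_mul, mul_one]
  have hgeo : S * (V - Y) * S = geo A B - X := by
    rw [mul_sub, sub_mul, hSYS]
    rfl
  rwa [hgeo] at hfin

lemma geo_mono {A A' B B' : Mat} (hA : A.PosDef) (hB : B.PosDef)
    (hA' : A'.PosDef) (hB' : B'.PosDef)
    (h1 : (A' - A).PosSemidef) (h2 : (B' - B).PosSemidef) :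
    (geo A' B' - geo A B).PosSemidef := by
  apply geo_max hA' hB' (geo_herm hA hB)
  have e1 : A + (A' - A) = A' := by abel
  have e2 : B + (B' - B) = B' := by abel
  have : fromBlocks A' (geo A B) (geo A B) B' =
      fromBlocks A (geo A B) (geo A B) B + fromBlocks (A' - A) 0 0 (B' - B) := by
    simp only [fromBlocks_add, e1, e2, add_zero]
  rw [this]
  exact (geo_block hA hB).add (psd_blockdiag h1 h2)

lemma geo_concave {A₁ B₁ A₂ B₂ : Mat} (hA₁ : A₁.PosDef) (hB₁ : B₁.PosDef)
    (hA₂ : A₂.PosDef) (hB₂ : B₂.PosDef) {α : ℝ} (h0 : 0 ≤ α) (h1 : α ≤ 1) :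
    (geo (α • A₁ + (1 - α) • A₂) (α • B₁ + (1 - α) • B₂) -
      (α • geo A₁ B₁ + (1 - α) • geo A₂ B₂)).PosSemidef := by
  apply geo_max (pd_convex hA₁ hA₂ h0 h1) (pd_convex hB₁ hB₂ h0 h1)
    ((herm_smul (geo_herm hA₁ hB₁) α).add (herm_smul (geo_herm hA₂ hB₂) (1 - α)))
  have : α • fromBlocks A₁ (geo A₁ B₁) (geo A₁ B₁) B₁ +
      (1 - α) • fromBlocks A₂ (geo A₂ B₂) (geo A₂ B₂) B₂ =
      fromBlocks (α • A₁ + (1 - α) • A₂)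
        (α • geo A₁ B₁ + (1 - α) • geo A₂ B₂)
        (α • geo A₁ B₁ + (1 - α) • geo A₂ B₂)
        (α • B₁ + (1 - α) • B₂) := by
    rw [fromBlocks_smul, fromBlocks_smul, fromBlocks_add]
  rw [← this]
  exact (psd_smul (geo_block hA₁ hB₁) h0).add (psd_smul (geo_block hA₂ hB₂) (by linarith))

end geoSection

section gpowSection

/-- weighted-power perspective `C^{1/2} (C^{-1/2} M C^{-1/2})^r C^{1/2}` -/
noncomputable def gpow (r : ℝ) (C M : Mat) : Mat :=
  mpow C (1/2) * mpow (mpow C (-(1/2)) * M * mpow C (-(1/2))) r * mpow C (1/2)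

lemma gpow_pd {C M : Mat} (hC : C.PosDef) (hM : M.PosDef) (r : ℝ) :
    (gpow r C M).PosDef :=
  pd_conj_herm (mpow_pd (W_pd hC hM) r) (mpow_herm C _) (pd_det_isUnit (mpow_pd hC _))

lemma gpow_herm {C M : Mat} (hC : C.PosDef) (hM : M.PosDef) (r : ℝ) :
    (gpow r C M).IsHermitian :=
  herm_sandwich (mpow_herm C _) (mpow_herm _ _)

lemma gpow_zero {C M : Mat} (hC : C.PosDef) (hM : M.PosDef) :
    gpow 0 C M = C := by
  simp only [gpow]
  rw [mpow_zero (W_pd hC hM).1, mul_one, mpow_half_mul hC]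

lemma gpow_one {C M : Mat} (hC : C.PosDef) (hM : M.PosDef) :
    gpow 1 C M = M := by
  simp only [gpow]
  rw [mpow_one (W_pd hC hM).1]
  have hSR : mpow C (1/2) * mpow C (-(1/2)) = 1 := mpow_half_mul_neg_half hC
  have hRS : mpow C (-(1/2)) * mpow C (1/2) = 1 := mpow_neg_half_mul_half hC
  calc mpow C (1/2) * (mpow C (-(1/2)) * M * mpow C (-(1/2))) * mpow C (1/2)
      = (mpow C (1/2) * mpow C (-(1/2))) * M * (mpow C (-(1/2)) * mpow C (1/2)) := by
        noncomm_ring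
    _ = M := by rw [hSR, hRS, one_mul, mul_one]

set_option maxHeartbeats 1000000 in
lemma gpow_midpoint {C M : Mat} (hC : C.PosDef) (hM : M.PosDef) (p q : ℝ) :
    gpow ((p + q)/2) C M = geo (gpow p C M) (gpow q C M) := by
  have hW : (mpow C (-(1/2)) * M * mpow C (-(1/2))).PosDef := W_pd hC hM
  have hSR : mpow C (1/2) * mpow C (-(1/2)) = 1 := mpow_half_mul_neg_half hC
  have hRS : mpow C (-(1/2)) * mpow C (1/2) = 1 := mpow_neg_half_mul_half hC
  set S := mpow C (1/2) with hSdef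
  set R := mpow C (-(1/2)) with hRdef
  set W := R * M * R with hWdef
  -- apply Riccati uniqueness with A := gpow p, B := gpow q, G := gpow ((p+q)/2)
  refine riccati_unique (gpow_pd hC hM p) (gpow_pd hC hM q)
    (gpow_pd hC hM ((p + q)/2)) ?_
  have hinv : (gpow p C M)⁻¹ = R * mpow W (-p) * R := by
    have : (R * mpow W (-p) * R) * gpow p C M = 1 := by
      simp only [gpow, ← hSdef, ← hRdef, ← hWdef]
      calc (R * mpow W (-p) * R) * (S * (mpow W p) * S)
          = R * mpow W (-p) * (R * S) * (mpow W p) * S := by noncomm_ring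
        _ = R * (mpow W (-p) * mpow W p) * S := by rw [hRS]; noncomm_ring
        _ = R * S := by rw [mpow_mul hW, neg_add_cancel, mpow_zero hW.1, mul_one]
        _ = 1 := hRS
    exact Matrix.inv_eq_left_inv this
  simp only [gpow, ← hSdef, ← hRdef, ← hWdef] at hinv ⊢
  rw [hinv]
  calc S * mpow W ((p + q)/2) * S * (R * mpow W (-p) * R) * (S * mpow W ((p + q)/2) * S)
      = S * (mpow W ((p + q)/2) * (S * R) * mpow W (-p) * (R * S) *
          mpow W ((p + q)/2)) * S := by noncomm_ring
    _ = S * (mpow W ((p + q)/2) * mpow W (-p) * mpow W ((p + q)/2)) * S := by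
        rw [hSR, hRS]; noncomm_ring
    _ = S * mpow W q * S := by
        rw [mpow_mul hW, mpow_mul hW]
        congr 2
        ring

/-- joint concavity assertion for a given exponent -/
def Conc (n : ℕ) (r : ℝ) : Prop :=
  ∀ C₁ M₁ C₂ M₂ : Matrix (Fin n) (Fin n) ℂ, C₁.PosDef → M₁.PosDef → C₂.PosDef → M₂.PosDef →
    ∀ α : ℝ, 0 ≤ α → α ≤ 1 →
      (gpow r (α • C₁ + (1 - α) • C₂) (α • M₁ + (1 - α) • M₂) -
        (α • gpow r C₁ M₁ + (1 - α) • gpow r C₂ M₂)).PosSemidef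

lemma conc_zero : Conc n 0 := by
  intro C₁ M₁ C₂ M₂ hC₁ hM₁ hC₂ hM₂ α h0 h1
  rw [gpow_zero (pd_convex hC₁ hC₂ h0 h1) (pd_convex hM₁ hM₂ h0 h1),
    gpow_zero hC₁ hM₁, gpow_zero hC₂ hM₂, sub_self]
  exact PosSemidef.zero

lemma conc_one : Conc n 1 := by
  intro C₁ M₁ C₂ M₂ hC₁ hM₁ hC₂ hM₂ α h0 h1
  rw [gpow_one (pd_convex hC₁ hC₂ h0 h1) (pd_convex hM₁ hM₂ h0 h1),
    gpow_one hC₁ hM₁, gpow_one hC₂ hM₂, sub_self]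
  exact PosSemidef.zero

lemma psd_trans {A B C : Mat} (h1 : (B - A).PosSemidef) (h2 : (C - B).PosSemidef) :
    (C - A).PosSemidef := by
  have := h2.add h1
  rwa [sub_add_sub_cancel] at this

lemma conc_midpoint {p q : ℝ} (hp : Conc n p) (hq : Conc n q) : Conc n ((p + q)/2) := by
  intro C₁ M₁ C₂ M₂ hC₁ hM₁ hC₂ hM₂ α h0 h1
  have hC : (α • C₁ + (1 - α) • C₂).PosDef := pd_convex hC₁ hC₂ h0 h1
  have hM : (α • M₁ + (1 - α) • M₂).PosDef := pd_convex hM₁ hM₂ h0 h1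
  set Xp := α • gpow p C₁ M₁ + (1 - α) • gpow p C₂ M₂ with hXp
  set Xq := α • gpow q C₁ M₁ + (1 - α) • gpow q C₂ M₂ with hXq
  have hXppd : Xp.PosDef := pd_convex (gpow_pd hC₁ hM₁ p) (gpow_pd hC₂ hM₂ p) h0 h1
  have hXqpd : Xq.PosDef := pd_convex (gpow_pd hC₁ hM₁ q) (gpow_pd hC₂ hM₂ q) h0 h1
  have step1 : (gpow ((p + q)/2) (α • C₁ + (1 - α) • C₂) (α • M₁ + (1 - α) • M₂) -
      geo Xp Xq).PosSemidef := by
    rw [gpow_midpoint hC hM p q]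
    exact geo_mono hXppd hXqpd (gpow_pd hC hM p) (gpow_pd hC hM q)
      (hp C₁ M₁ C₂ M₂ hC₁ hM₁ hC₂ hM₂ α h0 h1) (hq C₁ M₁ C₂ M₂ hC₁ hM₁ hC₂ hM₂ α h0 h1)
  have step2 : (geo Xp Xq -
      (α • geo (gpow p C₁ M₁) (gpow q C₁ M₁) +
       (1 - α) • geo (gpow p C₂ M₂) (gpow q C₂ M₂))).PosSemidef :=
    geo_concave (gpow_pd hC₁ hM₁ p) (gpow_pd hC₁ hM₁ q)
      (gpow_pd hC₂ hM₂ p) (gpow_pd hC₂ hM₂ q) h0 h1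
  rw [← gpow_midpoint hC₁ hM₁ p q, ← gpow_midpoint hC₂ hM₂ p q] at step2
  exact psd_trans step2 step1

lemma conc_dyadic : ∀ m k : ℕ, k ≤ 2^m → Conc n ((k : ℝ) / 2^m) := by
  intro m
  induction m with
  | zero =>
    intro k hk
    interval_cases k
    · simpa using conc_zero
    · simpa using conc_one
  | succ m ih =>
    intro k hk
    rcases Nat.even_or_odd k with ⟨j, hj⟩ | ⟨j, hj⟩
    · have hj2 : j ≤ 2^m := by
        subst hj
        have : 2 * 2^m = 2^(m+1) := (pow_succ' 2 m).symm
        omega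
      have : ((k : ℝ)) / 2^(m+1) = (j : ℝ) / 2^m := by
        subst hj
        push_cast
        rw [pow_succ]
        field_simp
        ring
      rw [this]
      exact ih j hj2
    · have hj2 : j + 1 ≤ 2^m := by
        subst hj
        have : 2 * 2^m = 2^(m+1) := (pow_succ' 2 m).symm
        omega
      have heq : ((k : ℝ)) / 2^(m+1) = ((j : ℝ)/2^m + ((j:ℝ)+1)/2^m) / 2 := by
        subst hj
        push_cast
        rw [pow_succ]
        field_simp
        ring
      rw [heq]
      have := conc_midpoint (n := n) (ih j (by omega)) (ih (j+1) hj2)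
      simpa using this

lemma mpow_continuous {W : Mat} (hW : W.PosDef) :
    Continuous (fun r : ℝ => mpow W r) := by
  have heq : (fun r : ℝ => mpow W r) =
      fun r => (hW.1.eigenvectorUnitary : Mat) *
        Matrix.diagonal (fun i => ((hW.1.eigenvalues i ^ r : ℝ) : ℂ)) *
        (star (hW.1.eigenvectorUnitary : Mat)) :=
    funext fun r => mpow_eq hW.1 r
  rw [heq]
  refine (continuous_const.matrix_mul ?_).matrix_mul continuous_const
  apply Continuous.matrix_diagonal
  apply continuous_pi
  intro i
  have : (fun r : ℝ => ((hW.1.eigenvalues i ^ r : ℝ) : ℂ)) =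
      fun r : ℝ => ((Real.exp (Real.log (hW.1.eigenvalues i) * r) : ℝ) : ℂ) :=
    funext fun r => by rw [Real.rpow_def_of_pos (hW.eigenvalues_pos i)]
  rw [this]
  exact Complex.continuous_ofReal.comp
    (Real.continuous_exp.comp (continuous_const.mul continuous_id))

lemma herm_dot_im {A : Mat} (hA : A.IsHermitian) (x : Fin n → ℂ) :
    (star x ⬝ᵥ (A *ᵥ x)).im = 0 := by
  have h1 : star (star x ⬝ᵥ (A *ᵥ x)) = star (A *ᵥ x) ⬝ᵥ x := (star_dotProduct _ _).symm
  have h2 : star (A *ᵥ x) = star x ᵥ* A := by rw [star_mulVec, hA.eq]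
  have h3 : (star x ᵥ* A) ⬝ᵥ x = star x ⬝ᵥ (A *ᵥ x) := (dotProduct_mulVec _ _ _).symm
  have : star (star x ⬝ᵥ (A *ᵥ x)) = star x ⬝ᵥ (A *ᵥ x) := by rw [h1, h2, h3]
  rw [Complex.star_def] at this
  exact Complex.conj_eq_iff_im.mp this

lemma conc_of_mem {p : ℝ} (h0 : 0 ≤ p) (h1 : p ≤ 1) : Conc n p := by
  intro C₁ M₁ C₂ M₂ hC₁ hM₁ hC₂ hM₂ α hα0 hα1
  have hC : (α • C₁ + (1 - α) • C₂).PosDef := pd_convex hC₁ hC₂ hα0 hα1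
  have hM : (α • M₁ + (1 - α) • M₂).PosDef := pd_convex hM₁ hM₂ hα0 hα1
  set E : ℝ → Mat := fun r =>
    gpow r (α • C₁ + (1 - α) • C₂) (α • M₁ + (1 - α) • M₂) -
      (α • gpow r C₁ M₁ + (1 - α) • gpow r C₂ M₂) with hE
  show (E p).PosSemidef
  -- continuity
  have hgc : ∀ (C M : Mat), C.PosDef → M.PosDef → Continuous fun r : ℝ => gpow r C M := by
    intro C M hC hM
    simp only [gpow]
    exact (continuous_const.matrix_mul (mpow_continuous (W_pd hC hM))).matrix_mul
      continuous_const
  have hEc : Continuous E := by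
    rw [hE]
    exact (hgc _ _ hC hM).sub
      (((hgc _ _ hC₁ hM₁).const_smul α).add ((hgc _ _ hC₂ hM₂).const_smul (1 - α)))
  -- hermitian
  have hEherm : ∀ r, (E r).IsHermitian := fun r =>
    (gpow_herm hC hM r).sub ((herm_smul (gpow_herm hC₁ hM₁ r) α).add
      (herm_smul (gpow_herm hC₂ hM₂ r) (1 - α)))
  -- dyadic approximation sequence
  set k : ℕ → ℕ := fun m => ⌊p * 2^m⌋₊ with hk
  have hkle : ∀ m, k m ≤ 2^m := by
    intro m
    have : p * 2^m ≤ ((2^m : ℕ) : ℝ) := by push_cast; nlinarith [pow_pos (by norm_num : (0:ℝ) < 2) m]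
    calc k m ≤ ⌊((2^m : ℕ) : ℝ)⌋₊ := Nat.floor_mono this
      _ = 2^m := Nat.floor_natCast _
  set r : ℕ → ℝ := fun m => (k m : ℝ) / 2^m with hr
  have hr_le : ∀ m, r m ≤ p := by
    intro m
    rw [hr]
    have h2m : (0:ℝ) < 2^m := pow_pos (by norm_num) m
    rw [div_le_iff₀ h2m]
    simpa [mul_comm] using Nat.floor_le (by positivity : (0:ℝ) ≤ p * 2^m)
  have hr_ge : ∀ m, p - (1/2)^m ≤ r m := by
    intro m
    rw [hr]
    have h2m : (0:ℝ) < 2^m := pow_pos (by norm_num) m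
    rw [le_div_iff₀ h2m]
    have := Nat.lt_floor_add_one (p * 2^m)
    have hpow : ((1:ℝ)/2)^m * 2^m = 1 := by
      rw [div_pow, one_pow, div_mul_cancel₀ _ (ne_of_gt h2m)]
    nlinarith [this]
  have htend : Filter.Tendsto r Filter.atTop (nhds p) := by
    apply tendsto_of_tendsto_of_tendsto_of_le_of_le (g := fun m => p - (1/2)^m)
      (h := fun _ => p)
    · have : Filter.Tendsto (fun m : ℕ => (1/2 : ℝ)^m) Filter.atTop (nhds 0) := by
        apply tendsto_pow_atTop_nhds_zero_of_lt_one <;> norm_num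
      have := tendsto_const_nhds (x := p) (f := Filter.atTop (α := ℕ)) |>.sub this
      simpa using this
    · exact tendsto_const_nhds
    · exact hr_ge
    · exact hr_le
  -- conclude
  refine .of_dotProduct_mulVec_nonneg (hEherm p) fun x => ?_
  have hdy : ∀ m : ℕ, (0:ℂ) ≤ star x ⬝ᵥ (E (r m) *ᵥ x) := by
    intro m
    exact (conc_dyadic m (k m) (hkle m) C₁ M₁ C₂ M₂ hC₁ hM₁ hC₂ hM₂ α hα0 hα1).dotProduct_mulVec_nonneg x
  have hgcont : Continuous fun t : ℝ => (star x ⬝ᵥ (E t *ᵥ x)).re :=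
    Complex.continuous_re.comp
      ((continuous_const (y := star x)).dotProduct (hEc.matrix_mulVec continuous_const))
  have hre : 0 ≤ (star x ⬝ᵥ (E p *ᵥ x)).re := by
    refine ge_of_tendsto ((hgcont.tendsto p).comp htend) ?_
    filter_upwards with m
    have := (Complex.le_def.mp (hdy m)).1
    simpa using this
  have him : (star x ⬝ᵥ (E p *ᵥ x)).im = 0 := herm_dot_im (hEherm p) x
  exact Complex.le_def.mpr ⟨by simpa using hre, by simpa using him.symm⟩

end gpowSection

end Aux


theorem stmt9 {n : ℕ} (p lam : ℝ) (hp0 : 0 < p) (hp1 : p ≤ 1)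
    (hl0 : 0 ≤ lam) (hl1 : lam ≤ 1)
    (A₁ B₁ C₁ A₂ B₂ C₂ : Matrix (Fin n) (Fin n) ℂ)
    (hA₁ : A₁.PosDef) (hB₁ : B₁.PosDef) (hC₁ : C₁.PosDef)
    (hA₂ : A₂.PosDef) (hB₂ : B₂.PosDef) (hC₂ : C₂.PosDef)
    (α : ℝ) (hα0 : 0 ≤ α) (hα1 : α ≤ 1) :
    (persp lam p (α • A₁ + (1 - α) • A₂) (α • B₁ + (1 - α) • B₂)
        (α • C₁ + (1 - α) • C₂) -
      (α • persp lam p A₁ B₁ C₁ + (1 - α) • persp lam p A₂ B₂ C₂)).PosSemidef := by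
  have hM₁ : (lam • A₁ + (1 - lam) • B₁).PosDef := Aux.pd_convex hA₁ hB₁ hl0 hl1
  have hM₂ : (lam • A₂ + (1 - lam) • B₂).PosDef := Aux.pd_convex hA₂ hB₂ hl0 hl1
  have key := Aux.conc_of_mem (le_of_lt hp0) hp1 C₁ (lam • A₁ + (1 - lam) • B₁)
    C₂ (lam • A₂ + (1 - lam) • B₂) hC₁ hM₁ hC₂ hM₂ α hα0 hα1
  have hpersp : ∀ A B C : Matrix (Fin n) (Fin n) ℂ,
      persp lam p A B C = Aux.gpow p C (lam • A + (1 - lam) • B) := fun _ _ _ => rfl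
  have hcombo : lam • (α • A₁ + (1 - α) • A₂) + (1 - lam) • (α • B₁ + (1 - α) • B₂) =
      α • (lam • A₁ + (1 - lam) • B₁) + (1 - α) • (lam • A₂ + (1 - lam) • B₂) := by
    module
  rw [hpersp, hpersp, hpersp, hcombo]
  exact key
end

section
/- Let 0 < p ≤ 1 and let K be any fixed n×n complex matrix. The map (A, B) ↦ Re Tr(Kᴴ A^p K B^{1-p}) is jointly concave on pairs of n×n positive definite complex matrices: for positive definite A₁, A₂, B₁, B₂ and α ∈ [0,1], Re Tr(Kᴴ (αA₁+(1-α)A₂)^p K (αB₁+(1-α)B₂)^{1-p}) ≥ α Re Tr(Kᴴ A₁^p K B₁^{1-p}) + (1-α) Re Tr(Kᴴ A₂^p K B₂^{1-p}) (Lieb's concavity theorem). -/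
open Matrix
open scoped ComplexOrder

namespace LiebAux

open Matrix MeasureTheory Set

variable {n : ℕ}

noncomputable def evec (A : Matrix (Fin n) (Fin n) ℂ) : Matrix (Fin n) (Fin n) ℂ :=
  if hA : A.IsHermitian then (hA.eigenvectorUnitary : Matrix (Fin n) (Fin n) ℂ) else 1

noncomputable def evals (A : Matrix (Fin n) (Fin n) ℂ) : Fin n → ℝ :=
  if hA : A.IsHermitian then hA.eigenvalues else 1

lemma evec_mul_star {A : Matrix (Fin n) (Fin n) ℂ} (hA : A.IsHermitian) :
    evec A * star (evec A) = 1 := by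
  rw [evec, dif_pos hA]
  exact (Matrix.mem_unitaryGroup_iff).mp (hA.eigenvectorUnitary).2

lemma star_mul_evec {A : Matrix (Fin n) (Fin n) ℂ} (hA : A.IsHermitian) :
    star (evec A) * evec A = 1 := by
  rw [evec, dif_pos hA]
  exact (Matrix.mem_unitaryGroup_iff').mp (hA.eigenvectorUnitary).2

lemma spectral {A : Matrix (Fin n) (Fin n) ℂ} (hA : A.IsHermitian) :
    A = evec A * Matrix.diagonal (fun i => ((evals A i : ℝ) : ℂ)) * star (evec A) := by
  rw [evec, evals, dif_pos hA, dif_pos hA]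
  exact hA.spectral_theorem

lemma mpow_eq {A : Matrix (Fin n) (Fin n) ℂ} (hA : A.IsHermitian) (q : ℝ) :
    mpow A q = evec A * Matrix.diagonal (fun i => ((evals A i ^ q : ℝ) : ℂ)) * star (evec A) := by
  rw [mpow, dif_pos hA, evec, evals, dif_pos hA, dif_pos hA]

lemma evals_pos {A : Matrix (Fin n) (Fin n) ℂ} (hA : A.PosDef) (i : Fin n) :
    0 < evals A i := by
  rw [evals, dif_pos hA.isHermitian]
  exact hA.eigenvalues_pos i



lemma conj_reduce (U V X S T : Matrix (Fin n) (Fin n) ℂ) :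
    Matrix.trace (Xᴴ * (U * S * star U) * X * (V * T * star V))
      = Matrix.trace ((star U * X * V)ᴴ * S * (star U * X * V) * T) := by
  simp only [Matrix.star_eq_conjTranspose, Matrix.conjTranspose_mul,
    Matrix.conjTranspose_conjTranspose, Matrix.mul_assoc]
  rw [Matrix.trace_mul_comm (Vᴴ) (Xᴴ * (U * (S * (Uᴴ * (X * (V * T))))))]
  simp only [Matrix.mul_assoc]

lemma conj_left (U V X T : Matrix (Fin n) (Fin n) ℂ) (hU : U * star U = 1) :
    Matrix.trace (Xᴴ * X * (V * T * star V))
      = Matrix.trace ((star U * X * V)ᴴ * (star U * X * V) * T) := by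
  simp only [Matrix.star_eq_conjTranspose, Matrix.conjTranspose_mul,
    Matrix.conjTranspose_conjTranspose, Matrix.mul_assoc]
  rw [show U * (Uᴴ * (X * (V * T))) = (U * Uᴴ) * (X * (V * T)) by
      simp only [Matrix.mul_assoc],
    show U * Uᴴ = 1 by simpa [Matrix.star_eq_conjTranspose] using hU, Matrix.one_mul]
  rw [Matrix.trace_mul_comm (Vᴴ) (Xᴴ * (X * (V * T)))]
  simp only [Matrix.mul_assoc]

lemma conj_right (U V Y S : Matrix (Fin n) (Fin n) ℂ) (hV : V * star V = 1) :
    Matrix.trace (Yᴴ * (U * S * star U) * Y)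
      = Matrix.trace ((star U * Y * V)ᴴ * S * (star U * Y * V)) := by
  simp only [Matrix.star_eq_conjTranspose, Matrix.conjTranspose_mul,
    Matrix.conjTranspose_conjTranspose, Matrix.mul_assoc]
  rw [Matrix.trace_mul_comm (Vᴴ) (Yᴴ * (U * (S * (Uᴴ * (Y * V)))))]
  simp only [Matrix.mul_assoc]
  rw [show V * Vᴴ = 1 by simpa [Matrix.star_eq_conjTranspose] using hV, Matrix.mul_one]



lemma entry_re (d e : ℝ) (m : ℂ) :
    ((starRingEnd ℂ) m * ((d:ℂ) * m * (e:ℂ))).re = d * e * ‖m‖ ^ 2 := by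
  have h : (starRingEnd ℂ) m * ((d:ℂ) * m * (e:ℂ)) = ((d:ℂ) * (e:ℂ)) * ((starRingEnd ℂ) m * m) := by
    ring
  rw [h, RCLike.conj_mul]
  simp [Complex.mul_re]
  left; norm_cast

lemma trace_diag_diag (d e : Fin n → ℝ) (M : Matrix (Fin n) (Fin n) ℂ) :
    (Matrix.trace (Mᴴ * Matrix.diagonal (fun i => ((d i : ℝ) : ℂ)) * M *
        Matrix.diagonal (fun j => ((e j : ℝ) : ℂ)))).re
      = ∑ i, ∑ j, d i * e j * ‖M i j‖ ^ 2 := by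
  have h : Mᴴ * Matrix.diagonal (fun i => ((d i : ℝ) : ℂ)) * M *
        Matrix.diagonal (fun j => ((e j : ℝ) : ℂ))
      = Mᴴ * ((Matrix.diagonal (fun i => ((d i : ℝ) : ℂ)) * M) *
        Matrix.diagonal (fun j => ((e j : ℝ) : ℂ))) := by
    simp only [Matrix.mul_assoc]
  rw [h, Matrix.trace]
  simp only [Matrix.diag_apply, Matrix.mul_apply, Matrix.diagonal_apply,
    Matrix.conjTranspose_apply, Matrix.star_apply, RCLike.star_def, ite_mul, mul_ite,
    zero_mul, mul_zero, Finset.sum_ite_eq, Finset.sum_ite_eq', Finset.mem_univ, if_true]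
  rw [Complex.re_sum]
  have step : ∑ i, (∑ j, (starRingEnd ℂ) (M j i) * ((d j : ℂ) * M j i * (e i : ℂ))).re
      = ∑ i, ∑ j, d j * e i * ‖M j i‖ ^ 2 := by
    refine Finset.sum_congr rfl fun i _ => ?_
    rw [Complex.re_sum]
    exact Finset.sum_congr rfl fun j _ => entry_re (d j) (e i) (M j i)
  rw [step]
  exact Finset.sum_comm

lemma trace_one_diag (e : Fin n → ℝ) (W : Matrix (Fin n) (Fin n) ℂ) :
    (Matrix.trace (Wᴴ * W * Matrix.diagonal (fun j => ((e j : ℝ) : ℂ)))).re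
      = ∑ i, ∑ j, e j * ‖W i j‖ ^ 2 := by
  have h := trace_diag_diag (fun _ => (1:ℝ)) e W
  simpa [Matrix.diagonal_one] using h

lemma trace_diag_one (d : Fin n → ℝ) (Z : Matrix (Fin n) (Fin n) ℂ) :
    (Matrix.trace (Zᴴ * Matrix.diagonal (fun i => ((d i : ℝ) : ℂ)) * Z)).re
      = ∑ i, ∑ j, d i * ‖Z i j‖ ^ 2 := by
  have h := trace_diag_diag d (fun _ => (1:ℝ)) Z
  simpa [Matrix.diagonal_one] using h



lemma scalar_le {d e s : ℝ} (hd : 0 < d) (he : 0 < e) (hs : 0 < s) (x y : ℂ) :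
    d * e / (d + s * e) * ‖x + y‖ ^ 2 ≤ e * ‖x‖ ^ 2 + s⁻¹ * (d * ‖y‖ ^ 2) := by
  have hde : 0 < d + s * e := by positivity
  rw [div_mul_eq_mul_div, div_le_iff₀ hde]
  rw [← mul_le_mul_iff_right₀ hs]
  have hexp : s * ((e * ‖x‖ ^ 2 + s⁻¹ * (d * ‖y‖ ^ 2)) * (d + s * e))
      = (s * e * ‖x‖ ^ 2 + d * ‖y‖ ^ 2) * (d + s * e) := by
    field_simp
  rw [hexp]
  have h1 : s * d * e * ‖x + y‖ ^ 2 ≤ s * d * e * (‖x‖ + ‖y‖) ^ 2 :=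
    mul_le_mul_of_nonneg_left
      (pow_le_pow_left₀ (norm_nonneg _) (norm_add_le x y) 2) (by positivity)
  nlinarith [sq_nonneg (s * e * ‖x‖ - d * ‖y‖)]

lemma scalar_eq {d e s : ℝ} (hd : 0 < d) (he : 0 < e) (hs : 0 < s) (m : ℂ) :
    e * ‖(↑(d / (d + s * e)) : ℂ) * m‖ ^ 2
      + s⁻¹ * (d * ‖(↑(s * e / (d + s * e)) : ℂ) * m‖ ^ 2)
      = d * e / (d + s * e) * ‖m‖ ^ 2 := by
  have hde : 0 < d + s * e := by positivity
  rw [norm_mul, norm_mul, Complex.norm_real, Real.norm_eq_abs, Complex.norm_real,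
    Real.norm_eq_abs, abs_of_pos (by positivity), abs_of_pos (by positivity)]
  field_simp


noncomputable def Mco (A B K : Matrix (Fin n) (Fin n) ℂ) : Matrix (Fin n) (Fin n) ℂ :=
  star (evec A) * K * evec B

noncomputable def hfun (A B K : Matrix (Fin n) (Fin n) ℂ) (s : ℝ) : ℝ :=
  ∑ i, ∑ j, evals A i * evals B j / (evals A i + s * evals B j) * ‖Mco A B K i j‖ ^ 2

/-- trace formula for the Lieb functional -/
lemma F_eq {A B : Matrix (Fin n) (Fin n) ℂ} (hA : A.IsHermitian) (hB : B.IsHermitian)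
    (K : Matrix (Fin n) (Fin n) ℂ) (q r : ℝ) :
    (Matrix.trace (Kᴴ * mpow A q * K * mpow B r)).re
      = ∑ i, ∑ j, evals A i ^ q * evals B j ^ r * ‖Mco A B K i j‖ ^ 2 := by
  rw [mpow_eq hA q, mpow_eq hB r, conj_reduce]
  have := trace_diag_diag (fun i => evals A i ^ q) (fun j => evals B j ^ r)
    (star (evec A) * K * evec B)
  rw [this]
  rfl

lemma hfun_le {A B : Matrix (Fin n) (Fin n) ℂ} (hA : A.PosDef) (hB : B.PosDef)
    (K X Y : Matrix (Fin n) (Fin n) ℂ) (hXY : X + Y = K) {s : ℝ} (hs : 0 < s) :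
    hfun A B K s ≤ (Matrix.trace (Xᴴ * X * B)).re
      + s⁻¹ * (Matrix.trace (Yᴴ * A * Y)).re := by
  have hX : (Matrix.trace (Xᴴ * X * B)).re
      = ∑ i, ∑ j, evals B j * ‖(star (evec A) * X * evec B) i j‖ ^ 2 := by
    conv_lhs => rw [spectral hB.isHermitian]
    rw [conj_left (evec A) (evec B) X _ (evec_mul_star hA.isHermitian),
      trace_one_diag]
  have hY : (Matrix.trace (Yᴴ * A * Y)).re
      = ∑ i, ∑ j, evals A i * ‖(star (evec A) * Y * evec B) i j‖ ^ 2 := by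
    conv_lhs => rw [spectral hA.isHermitian]
    rw [conj_right (evec A) (evec B) Y _ (evec_mul_star hB.isHermitian),
      trace_diag_one]
  rw [hX, hY, Finset.mul_sum]
  simp_rw [Finset.mul_sum, ← Finset.sum_add_distrib]
  refine Finset.sum_le_sum fun i _ => Finset.sum_le_sum fun j _ => ?_
  have hM : Mco A B K i j = (star (evec A) * X * evec B) i j
      + (star (evec A) * Y * evec B) i j := by
    rw [Mco, ← hXY]
    simp [Matrix.add_mul, Matrix.mul_add]
  rw [hM]
  exact scalar_le (evals_pos hA i) (evals_pos hB j) hs _ _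


lemma hfun_exists {A B : Matrix (Fin n) (Fin n) ℂ} (hA : A.PosDef) (hB : B.PosDef)
    (K : Matrix (Fin n) (Fin n) ℂ) {s : ℝ} (hs : 0 < s) :
    ∃ X Y : Matrix (Fin n) (Fin n) ℂ, X + Y = K ∧
      hfun A B K s = (Matrix.trace (Xᴴ * X * B)).re
        + s⁻¹ * (Matrix.trace (Yᴴ * A * Y)).re := by
  set U := evec A with hU
  set V := evec B with hV
  set M := Mco A B K with hMdef
  set X' : Matrix (Fin n) (Fin n) ℂ := Matrix.of (fun i j =>
    (↑(evals A i / (evals A i + s * evals B j)) : ℂ) * M i j) with hX'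
  set Y' : Matrix (Fin n) (Fin n) ℂ := Matrix.of (fun i j =>
    (↑(s * evals B j / (evals A i + s * evals B j)) : ℂ) * M i j) with hY'
  refine ⟨U * X' * star V, U * Y' * star V, ?_, ?_⟩
  · have hXY' : X' + Y' = M := by
      ext i j
      have hde : 0 < evals A i + s * evals B j := by
        have := evals_pos hA i; have := evals_pos hB j; positivity
      simp only [Matrix.add_apply, hX', hY', Matrix.of_apply]
      rw [← add_mul, ← Complex.ofReal_add, ← add_div, div_self hde.ne']
      simp
    have : U * X' * star V + U * Y' * star V = U * (X' + Y') * star V := by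
      simp [Matrix.add_mul, Matrix.mul_add]
    rw [this, hXY', hMdef, Mco, ← hU, ← hV]
    calc U * (star U * K * V) * star V
        = (U * star U) * K * (V * star V) := by simp only [Matrix.mul_assoc]
      _ = K := by rw [evec_mul_star hA.isHermitian, evec_mul_star hB.isHermitian]; simp
  · have hWX : star U * (U * X' * star V) * V = X' := by
      calc star U * (U * X' * star V) * V = (star U * U) * X' * (star V * V) := by
            simp only [Matrix.mul_assoc]
        _ = X' := by rw [star_mul_evec hA.isHermitian, star_mul_evec hB.isHermitian]; simp
    have hWY : star U * (U * Y' * star V) * V = Y' := by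
      calc star U * (U * Y' * star V) * V = (star U * U) * Y' * (star V * V) := by
            simp only [Matrix.mul_assoc]
        _ = Y' := by rw [star_mul_evec hA.isHermitian, star_mul_evec hB.isHermitian]; simp
    have hX : (Matrix.trace ((U * X' * star V)ᴴ * (U * X' * star V) * B)).re
        = ∑ i, ∑ j, evals B j * ‖X' i j‖ ^ 2 := by
      conv_lhs => rw [spectral hB.isHermitian, ← hV]
      rw [conj_left U V _ _ (evec_mul_star hA.isHermitian), hWX, trace_one_diag]
    have hYt : (Matrix.trace ((U * Y' * star V)ᴴ * A * (U * Y' * star V))).re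
        = ∑ i, ∑ j, evals A i * ‖Y' i j‖ ^ 2 := by
      conv_lhs => rw [spectral hA.isHermitian, ← hU]
      rw [conj_right U V _ _ (evec_mul_star hB.isHermitian), hWY, trace_diag_one]
    rw [hX, hYt, Finset.mul_sum]
    simp_rw [Finset.mul_sum, ← Finset.sum_add_distrib]
    rw [hfun]
    refine Finset.sum_congr rfl fun i _ => Finset.sum_congr rfl fun j _ => ?_
    have h := scalar_eq (evals_pos hA i) (evals_pos hB j) hs (M i j)
    rw [hX', hY']
    simpa using h.symm


lemma lin_right (X B₁ B₂ : Matrix (Fin n) (Fin n) ℂ) (a b : ℝ) :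
    (Matrix.trace (Xᴴ * X * (a • B₁ + b • B₂))).re
      = a * (Matrix.trace (Xᴴ * X * B₁)).re + b * (Matrix.trace (Xᴴ * X * B₂)).re := by
  rw [Matrix.mul_add, Matrix.mul_smul, Matrix.mul_smul, Matrix.trace_add,
    Matrix.trace_smul, Matrix.trace_smul]
  simp [Complex.smul_re]

lemma lin_mid (Y A₁ A₂ : Matrix (Fin n) (Fin n) ℂ) (a b : ℝ) :
    (Matrix.trace (Yᴴ * (a • A₁ + b • A₂) * Y)).re
      = a * (Matrix.trace (Yᴴ * A₁ * Y)).re + b * (Matrix.trace (Yᴴ * A₂ * Y)).re := by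
  rw [Matrix.mul_add, Matrix.add_mul, Matrix.mul_smul, Matrix.mul_smul,
    Matrix.smul_mul, Matrix.smul_mul, Matrix.trace_add, Matrix.trace_smul, Matrix.trace_smul]
  simp [Complex.smul_re]

lemma hfun_concave {A₁ A₂ B₁ B₂ : Matrix (Fin n) (Fin n) ℂ}
    (hA₁ : A₁.PosDef) (hA₂ : A₂.PosDef) (hB₁ : B₁.PosDef) (hB₂ : B₂.PosDef)
    (K : Matrix (Fin n) (Fin n) ℂ) {α : ℝ} (hα0 : 0 ≤ α) (hα1 : α ≤ 1)
    (hAc : (α • A₁ + (1 - α) • A₂).PosDef) (hBc : (α • B₁ + (1 - α) • B₂).PosDef)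
    {s : ℝ} (hs : 0 < s) :
    α * hfun A₁ B₁ K s + (1 - α) * hfun A₂ B₂ K s
      ≤ hfun (α • A₁ + (1 - α) • A₂) (α • B₁ + (1 - α) • B₂) K s := by
  obtain ⟨X, Y, hXY, heq⟩ := hfun_exists hAc hBc K hs
  rw [heq, lin_right X B₁ B₂ α (1 - α), lin_mid Y A₁ A₂ α (1 - α)]
  have h₁ := hfun_le hA₁ hB₁ K X Y hXY hs
  have h₂ := hfun_le hA₂ hB₂ K X Y hXY hs
  nlinarith [h₁, h₂, hα0, hα1]



lemma integrable_core {p d e : ℝ} (hp0 : 0 < p) (hp1 : p < 1) (hd : 0 < d) (he : 0 < e) :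
    IntegrableOn (fun s : ℝ => s ^ (p-1) * (d * e / (d + s * e))) (Ioi 0) := by
  have hmeas : Measurable (fun s : ℝ => s ^ (p-1) * (d * e / (d + s * e))) := by fun_prop
  have hsplit : Ioi (0:ℝ) = Ioc 0 1 ∪ Ioi 1 := (Ioc_union_Ioi_eq_Ioi zero_le_one).symm
  rw [hsplit]
  refine IntegrableOn.union ?_ ?_
  · -- near 0 : dominate by e * s^(p-1)
    have hint : IntegrableOn (fun s : ℝ => e * s ^ (p-1)) (Ioc (0:ℝ) 1) :=
      (intervalIntegrable_iff_integrableOn_Ioc_of_le zero_le_one).mp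
        ((intervalIntegral.intervalIntegrable_rpow' (by linarith)).const_mul e)
    refine hint.mono' hmeas.aestronglyMeasurable.restrict ?_
    refine (ae_restrict_iff' measurableSet_Ioc).mpr (Filter.Eventually.of_forall ?_)
    intro s hs
    have hs0 : 0 < s := hs.1
    have hden : 0 < d + s * e := by positivity
    have hfrac : d * e / (d + s * e) ≤ e := by
      rw [div_le_iff₀ hden]; nlinarith [mul_pos (mul_pos hs0 he) he]
    have h1 : 0 ≤ s ^ (p-1) := Real.rpow_nonneg hs0.le _
    rw [Real.norm_eq_abs, abs_of_nonneg (by positivity)]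
    calc s ^ (p-1) * (d * e / (d + s * e)) ≤ s ^ (p-1) * e := by
          exact mul_le_mul_of_nonneg_left hfrac h1
      _ = e * s ^ (p-1) := mul_comm _ _
  · -- tail : dominate by d * s^(p-2)
    have hint : IntegrableOn (fun s : ℝ => d * s ^ (p-2)) (Ioi (1:ℝ)) :=
      (integrableOn_Ioi_rpow_of_lt (by linarith) zero_lt_one).const_mul d
    refine hint.mono' hmeas.aestronglyMeasurable.restrict ?_
    refine (ae_restrict_iff' measurableSet_Ioi).mpr (Filter.Eventually.of_forall ?_)
    intro s hs
    have hs0 : (0:ℝ) < s := lt_trans zero_lt_one hs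
    have hden : 0 < d + s * e := by positivity
    have hfrac : d * e / (d + s * e) ≤ d / s := by
      rw [div_le_div_iff₀ hden hs0]; nlinarith
    have h1 : 0 ≤ s ^ (p-1) := Real.rpow_nonneg hs0.le _
    rw [Real.norm_eq_abs, abs_of_nonneg (by positivity)]
    calc s ^ (p-1) * (d * e / (d + s * e)) ≤ s ^ (p-1) * (d / s) :=
          mul_le_mul_of_nonneg_left hfrac h1
      _ = d * s ^ (p-2) := by
          rw [show p - 2 = (p-1) + (-1) by ring, Real.rpow_add hs0, Real.rpow_neg_one]
          ring

noncomputable def Cp (p : ℝ) : ℝ := ∫ s in Ioi (0:ℝ), s ^ (p-1) * (1 / (1 + s))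

lemma integral_core {p d e : ℝ} (hp0 : 0 < p) (hp1 : p < 1) (hd : 0 < d) (he : 0 < e) :
    ∫ s in Ioi (0:ℝ), s ^ (p-1) * (d * e / (d + s * e)) = d ^ p * e ^ (1-p) * Cp p := by
  have hc : 0 < e / d := div_pos he hd
  have key := MeasureTheory.integral_comp_mul_left_Ioi
      (fun u : ℝ => u ^ (p-1) * (1 / (1 + u))) 0 hc
  rw [mul_zero] at key
  have heq : EqOn (fun s : ℝ => s ^ (p-1) * (d * e / (d + s * e)))
      (fun s : ℝ => (d ^ p * e ^ (1-p) * (e/d)) •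
        ((e/d * s) ^ (p-1) * (1 / (1 + e/d * s)))) (Ioi 0) := by
    intro s hs
    have hs0 : (0:ℝ) < s := hs
    have hden : 0 < d + s * e := by positivity
    have h1 : (e/d*s) ^ (p-1) = (e/d)^(p-1) * s^(p-1) := Real.mul_rpow hc.le hs0.le
    have h2 : 1 + (e/d * s) = (d + s * e)/d := by field_simp
    have h3 : (e/d)^(p-1) = e^(p-1)/d^(p-1) := Real.div_rpow he.le hd.le (p-1)
    have h4 : d ^ p = d^(p-1) * d := by
      have h := Real.rpow_add hd (p-1) 1
      rw [show p - 1 + 1 = p by ring, Real.rpow_one] at h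
      exact h
    have h5 : e^(1-p) * e^(p-1) = 1 := by
      rw [← Real.rpow_add he]; norm_num
    have h6 : e^(1-p) = (e^(p-1))⁻¹ := eq_inv_of_mul_eq_one_left h5
    have hdp : (0:ℝ) < d^(p-1) := Real.rpow_pos_of_pos hd _
    have hep : (0:ℝ) < e^(p-1) := Real.rpow_pos_of_pos he _
    simp only [smul_eq_mul]
    rw [h1, h2, h3, h4, h6]
    field_simp
  rw [setIntegral_congr_fun measurableSet_Ioi heq, integral_smul, key, smul_smul, Cp,
    smul_eq_mul]
  have hI : (∫ (x : ℝ) in Ioi 0, (fun u : ℝ => u ^ (p - 1) * (1 / (1 + u))) x)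
      = ∫ (s : ℝ) in Ioi 0, s ^ (p - 1) * (1 / (1 + s)) := rfl
  rw [hI, mul_assoc (d ^ p * e ^ (1-p)) (e/d) ((e/d)⁻¹), mul_inv_cancel₀ hc.ne', mul_one]

lemma Cp_integrand_eq (p : ℝ) :
    (fun s : ℝ => s ^ (p-1) * ((1:ℝ) * 1 / (1 + s * 1))) = fun s => s ^ (p-1) * (1 / (1 + s)) := by
  funext s; norm_num

lemma Cp_integrable {p : ℝ} (hp0 : 0 < p) (hp1 : p < 1) :
    IntegrableOn (fun s : ℝ => s ^ (p-1) * (1 / (1 + s))) (Ioi 0) := by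
  have h := integrable_core hp0 hp1 one_pos one_pos
  rwa [Cp_integrand_eq p] at h

lemma Cp_pos {p : ℝ} (hp0 : 0 < p) (hp1 : p < 1) : 0 < Cp p := by
  rw [Cp]
  rw [MeasureTheory.setIntegral_pos_iff_support_of_nonneg_ae ?_ (Cp_integrable hp0 hp1)]
  · refine lt_of_lt_of_le ?_ (measure_mono (?_ : Ioi (0:ℝ) ⊆ _))
    · simp [Real.volume_Ioi]
    · intro s hs
      have hs0 : (0:ℝ) < s := hs
      refine ⟨?_, hs⟩
      have : 0 < s ^ (p-1) * (1 / (1 + s)) := by positivity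
      exact Function.mem_support.mpr this.ne'
  · refine (ae_restrict_iff' measurableSet_Ioi).mpr (Filter.Eventually.of_forall ?_)
    intro s hs
    have hs0 : (0:ℝ) < s := hs
    positivity


lemma posdef_real_smul {A : Matrix (Fin n) (Fin n) ℂ} (hA : A.PosDef) {c : ℝ} (hc : 0 < c) :
    (c • A).PosDef := by
  refine Matrix.PosDef.of_dotProduct_mulVec_pos ?_ ?_
  · have : (c • A)ᴴ = c • Aᴴ := by
      ext i j
      simp [Matrix.conjTranspose_apply, Matrix.smul_apply, Complex.real_smul]
    rw [Matrix.IsHermitian, this, hA.isHermitian]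
  · intro x hx
    have h1 : (c • A) *ᵥ x = c • (A *ᵥ x) := smul_mulVec c A x
    rw [h1]
    have h2 : star x ⬝ᵥ c • (A *ᵥ x) = (c:ℂ) * (star x ⬝ᵥ (A *ᵥ x)) := by
      rw [dotProduct_smul]
      simp [Complex.real_smul]
    rw [h2]
    exact mul_pos (by exact_mod_cast hc) (hA.dotProduct_mulVec_pos hx)

lemma posdef_combo {A₁ A₂ : Matrix (Fin n) (Fin n) ℂ} (hA₁ : A₁.PosDef) (hA₂ : A₂.PosDef)
    {α : ℝ} (hα0 : 0 ≤ α) (hα1 : α ≤ 1) : (α • A₁ + (1 - α) • A₂).PosDef := by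
  rcases eq_or_lt_of_le hα0 with h|h
  · simpa [← h] using hA₂
  rcases eq_or_lt_of_le hα1 with h1|h1
  · simpa [h1] using hA₁
  · exact (posdef_real_smul hA₁ h).add (posdef_real_smul hA₂ (by linarith))

lemma hfun_integrand_eq (A B K : Matrix (Fin n) (Fin n) ℂ) (p : ℝ) :
    (fun s : ℝ => s ^ (p-1) * hfun A B K s)
      = fun s : ℝ => ∑ i, ∑ j, (s ^ (p-1)
          * (evals A i * evals B j / (evals A i + s * evals B j))) * ‖Mco A B K i j‖ ^ 2 := by
  funext s
  rw [hfun, Finset.mul_sum]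
  refine Finset.sum_congr rfl fun i _ => ?_
  rw [Finset.mul_sum]
  exact Finset.sum_congr rfl fun j _ => (mul_assoc _ _ _).symm

lemma hfun_integrable {p : ℝ} (hp0 : 0 < p) (hp1 : p < 1)
    {A B : Matrix (Fin n) (Fin n) ℂ} (hA : A.PosDef) (hB : B.PosDef)
    (K : Matrix (Fin n) (Fin n) ℂ) :
    IntegrableOn (fun s : ℝ => s ^ (p-1) * hfun A B K s) (Ioi 0) := by
  rw [hfun_integrand_eq]
  refine integrable_finset_sum _ fun i _ => integrable_finset_sum _ fun j _ => ?_
  exact (integrable_core hp0 hp1 (evals_pos hA i) (evals_pos hB j)).mul_const _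

lemma F_int {p : ℝ} (hp0 : 0 < p) (hp1 : p < 1)
    {A B : Matrix (Fin n) (Fin n) ℂ} (hA : A.PosDef) (hB : B.PosDef)
    (K : Matrix (Fin n) (Fin n) ℂ) :
    Cp p * (Matrix.trace (Kᴴ * mpow A p * K * mpow B (1-p))).re
      = ∫ s in Ioi (0:ℝ), s ^ (p-1) * hfun A B K s := by
  rw [F_eq hA.isHermitian hB.isHermitian K p (1-p), hfun_integrand_eq]
  rw [MeasureTheory.integral_finset_sum _ (fun i _ =>
    integrable_finset_sum _ fun j _ =>
      (integrable_core hp0 hp1 (evals_pos hA i) (evals_pos hB j)).mul_const _)]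
  rw [Finset.mul_sum]
  refine Finset.sum_congr rfl fun i _ => ?_
  rw [MeasureTheory.integral_finset_sum _ (fun j _ =>
    (integrable_core hp0 hp1 (evals_pos hA i) (evals_pos hB j)).mul_const _)]
  rw [Finset.mul_sum]
  refine Finset.sum_congr rfl fun j _ => ?_
  rw [MeasureTheory.integral_mul_const, integral_core hp0 hp1 (evals_pos hA i) (evals_pos hB j)]
  ring


lemma mpow_one {A : Matrix (Fin n) (Fin n) ℂ} (hA : A.IsHermitian) : mpow A 1 = A := by
  rw [mpow_eq hA]
  simp only [Real.rpow_one]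
  exact (spectral hA).symm

lemma mpow_zero' {A : Matrix (Fin n) (Fin n) ℂ} (hA : A.IsHermitian) : mpow A 0 = 1 := by
  rw [mpow_eq hA]
  have : (fun i => ((evals A i ^ (0:ℝ) : ℝ) : ℂ)) = fun _ => (1:ℂ) := by
    funext i; simp [Real.rpow_zero]
  rw [this]
  rw [show Matrix.diagonal (fun _ : Fin n => (1:ℂ)) = 1 from Matrix.diagonal_one]
  rw [Matrix.mul_one]
  exact evec_mul_star hA

end LiebAux

open LiebAux MeasureTheory Set



/-- Lieb's concavity theorem. -/
theorem stmt11 {n : ℕ} (p : ℝ) (hp0 : 0 < p) (hp1 : p ≤ 1)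
    (K : Matrix (Fin n) (Fin n) ℂ)
    (A₁ A₂ B₁ B₂ : Matrix (Fin n) (Fin n) ℂ)
    (hA₁ : A₁.PosDef) (hA₂ : A₂.PosDef) (hB₁ : B₁.PosDef) (hB₂ : B₂.PosDef)
    (α : ℝ) (hα0 : 0 ≤ α) (hα1 : α ≤ 1) :
    α * (Matrix.trace (Kᴴ * mpow A₁ p * K * mpow B₁ (1 - p))).re +
        (1 - α) * (Matrix.trace (Kᴴ * mpow A₂ p * K * mpow B₂ (1 - p))).re ≤
      (Matrix.trace (Kᴴ * mpow (α • A₁ + (1 - α) • A₂) p * K *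
        mpow (α • B₁ + (1 - α) • B₂) (1 - p))).re := by
  have hAc : (α • A₁ + (1 - α) • A₂).PosDef := posdef_combo hA₁ hA₂ hα0 hα1
  have hBc : (α • B₁ + (1 - α) • B₂).PosDef := posdef_combo hB₁ hB₂ hα0 hα1
  rcases lt_or_eq_of_le hp1 with hplt | hpeq
  · -- main case 0 < p < 1
    have hCp := Cp_pos hp0 hplt
    have hint1 := hfun_integrable hp0 hplt hA₁ hB₁ K
    have hint2 := hfun_integrable hp0 hplt hA₂ hB₂ K
    have hint3 := hfun_integrable hp0 hplt hAc hBc K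
    have e1 := F_int hp0 hplt hA₁ hB₁ K
    have e2 := F_int hp0 hplt hA₂ hB₂ K
    have e3 := F_int hp0 hplt hAc hBc K
    have mono : (∫ s in Ioi (0:ℝ), (α * (s ^ (p-1) * hfun A₁ B₁ K s)
          + (1 - α) * (s ^ (p-1) * hfun A₂ B₂ K s)))
        ≤ ∫ s in Ioi (0:ℝ), s ^ (p-1) * hfun (α • A₁ + (1 - α) • A₂)
            (α • B₁ + (1 - α) • B₂) K s := by
      refine setIntegral_mono_on ((hint1.const_mul α).add (hint2.const_mul (1 - α)))
        hint3 measurableSet_Ioi (fun s hs => ?_)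
      have hs0 : (0:ℝ) < s := hs
      have hcon := hfun_concave hA₁ hA₂ hB₁ hB₂ K hα0 hα1 hAc hBc hs0
      have hsp : (0:ℝ) ≤ s ^ (p-1) := Real.rpow_nonneg hs0.le _
      have := mul_le_mul_of_nonneg_left hcon hsp
      nlinarith [this]
    rw [MeasureTheory.integral_add (hint1.const_mul α) (hint2.const_mul (1 - α)),
      MeasureTheory.integral_const_mul, MeasureTheory.integral_const_mul,
      ← e1, ← e2, ← e3] at mono
    have key : Cp p * (α * (Matrix.trace (Kᴴ * mpow A₁ p * K * mpow B₁ (1 - p))).re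
        + (1 - α) * (Matrix.trace (Kᴴ * mpow A₂ p * K * mpow B₂ (1 - p))).re)
        ≤ Cp p * (Matrix.trace (Kᴴ * mpow (α • A₁ + (1 - α) • A₂) p * K *
            mpow (α • B₁ + (1 - α) • B₂) (1 - p))).re := by nlinarith [mono]
    exact (mul_le_mul_iff_right₀ hCp).mp key
  · -- p = 1 : the functional is linear
    subst hpeq
    rw [show (1:ℝ) - 1 = 0 by norm_num]
    rw [mpow_zero' hB₁.isHermitian, mpow_zero' hB₂.isHermitian, mpow_zero' hBc.isHermitian,
      mpow_one hA₁.isHermitian, mpow_one hA₂.isHermitian, mpow_one hAc.isHermitian,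
      Matrix.mul_one, Matrix.mul_one, Matrix.mul_one,
      lin_mid K A₁ A₂ α (1 - α)]
end
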